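/- Let k be a field, n, m ≥ 1 integers, and N = nm + 1. Let Δ : kS_N → kS_N ⊗_k kS_N be the algebra homomorphism determined by Δ(σ) = σ ⊗ σ for σ ∈ S_N. For t ≤ N let a_t ∈ kS_N denote the skew-symmetrizer Σ_{σ∈S_t} sgn(σ)·σ over the subgroup S_t of S_N permuting the first t letters, and let I_t ⊆ kS_N be the two-sided ideal generated by a_t. Then Δ(a_N) lies in I_{n+1} ⊗_k kS_N + kS_N ⊗_k I_{m+1}; equivalently, a_N lies in the kernel of the composite kS_N → kS_N ⊗ kS_N → (kS_N/I_{n+1}) ⊗ (kS_N/I_{m+1}). -/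

import Mathlib

open scoped TensorProduct

noncomputable section

variable (k : Type*) [Field k]

/-- The skew-symmetrizer `a_t = Σ_{σ ∈ S_t} sgn(σ)·σ` over the subgroup `S_t < S_N`
permuting the first `t` letters, as an element of the group algebra `k S_N`. -/
def skewSymmetrizerIn (N t : ℕ) (h : t ≤ N) : MonoidAlgebra k (Equiv.Perm (Fin N)) :=
  ∑ σ : Equiv.Perm (Fin t),
    (Equiv.Perm.sign σ : ℤ) •
      MonoidAlgebra.of k (Equiv.Perm (Fin N)) (σ.viaEmbedding (Fin.castLEEmb h))

/-- The two-sided ideal of `A` generated by `x`, as a `k`-submodule of `A`. -/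
def twoSidedSpan {A : Type*} [Ring A] [Algebra k A] (x : A) : Submodule k A :=
  Submodule.span k {y | ∃ g h : A, y = g * x * h}

/-- The algebra homomorphism `Δ : kS_N → kS_N ⊗_k kS_N` determined by `Δ(σ) = σ ⊗ σ`. -/
def comulSym (N : ℕ) :
    MonoidAlgebra k (Equiv.Perm (Fin N)) →ₐ[k]
      (MonoidAlgebra k (Equiv.Perm (Fin N)) ⊗[k] MonoidAlgebra k (Equiv.Perm (Fin N))) :=
  MonoidAlgebra.lift k _ (Equiv.Perm (Fin N))
    { toFun := fun σ => MonoidAlgebra.of k _ σ ⊗ₜ[k] MonoidAlgebra.of k _ σ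
      map_one' := by simp [Algebra.TensorProduct.one_def, MonoidAlgebra.one_def]
      map_mul' := fun a b => by simp [Algebra.TensorProduct.tmul_mul_tmul] }

namespace Stmt11

open Equiv Equiv.Perm MonoidAlgebra LinearMap

variable {k}

/-! ### A lexicographic strict order on permutation words -/

/-- `wlt σ τ`: the word of `σ` is lexicographically smaller than that of `τ`. -/
def wlt {N : ℕ} (σ τ : Equiv.Perm (Fin N)) : Prop :=
  ∃ p, σ p < τ p ∧ ∀ q, q < p → σ q = τ q

theorem wlt_irrefl {N : ℕ} (σ : Equiv.Perm (Fin N)) : ¬ wlt σ σ := by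
  rintro ⟨p, h, -⟩; exact lt_irrefl _ h

theorem wlt_trans {N : ℕ} {σ τ ρ : Equiv.Perm (Fin N)} (h₁ : wlt σ τ) (h₂ : wlt τ ρ) :
    wlt σ ρ := by
  obtain ⟨p, hp, hq⟩ := h₁
  obtain ⟨p', hp', hq'⟩ := h₂
  rcases lt_trichotomy p p' with h | rfl | h
  · exact ⟨p, by rw [← hq' p h]; exact hp, fun q hq2 => (hq q hq2).trans (hq' q (hq2.trans h))⟩
  · exact ⟨p, hp.trans hp', fun q hq2 => (hq q hq2).trans (hq' q hq2)⟩
  · exact ⟨p', by rw [hq p' h]; exact hp', fun q hq2 => (hq q (hq2.trans h)).trans (hq' q hq2)⟩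

/-- The number of permutations lexicographically above `σ`; a termination measure. -/
def wgt {N : ℕ} (σ : Equiv.Perm (Fin N)) : ℕ := Set.ncard {τ | wlt σ τ}

theorem wgt_lt_wgt {N : ℕ} {σ τ : Equiv.Perm (Fin N)} (h : wlt σ τ) : wgt τ < wgt σ := by
  apply Set.ncard_lt_ncard _ (Set.toFinite _)
  constructor
  · intro ρ hρ; exact wlt_trans h hρ
  · intro hsub
    exact wlt_irrefl τ (hsub h)

theorem wlt_induction {N : ℕ} (P : Equiv.Perm (Fin N) → Prop)
    (H : ∀ σ, (∀ τ, wlt σ τ → P τ) → P σ) : ∀ σ, P σ := by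
  have key : ∀ n σ, wgt σ ≤ n → P σ := by
    intro n
    induction n with
    | zero => intro σ hσ; exact H σ fun τ hτ => absurd (wgt_lt_wgt hτ) (by omega)
    | succ n ih => intro σ hσ; exact H σ fun τ hτ => ih τ (by have := wgt_lt_wgt hτ; omega)
  exact fun σ => key (wgt σ) σ le_rfl

/-! ### The permutation representation on `(Fin N → Fin d) → k` -/

variable (k) in
/-- The endomorphism of `(Fin N → Fin d) → k` induced by a permutation. -/
def permEnd {N : ℕ} (d : ℕ) (σ : Equiv.Perm (Fin N)) :
    Module.End k ((Fin N → Fin d) → k) :=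
  LinearMap.funLeft k k (fun I => I ∘ σ)

variable (k) in
/-- `permEnd` as a monoid homomorphism. -/
def permHom (N d : ℕ) : Equiv.Perm (Fin N) →* Module.End k ((Fin N → Fin d) → k) where
  toFun := permEnd k d
  map_one' := by
    refine LinearMap.ext fun f => funext fun I => ?_
    simp [permEnd]
  map_mul' := fun σ τ => by
    refine LinearMap.ext fun f => funext fun I => ?_
    simp only [permEnd, LinearMap.funLeft_apply, Module.End.mul_apply, Equiv.Perm.coe_mul,
      Function.comp_assoc]

variable (k) in
/-- The representation of the group algebra on `(Fin N → Fin d) → k`. -/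
def rep (N d : ℕ) : MonoidAlgebra k (Equiv.Perm (Fin N)) →ₐ[k]
    Module.End k ((Fin N → Fin d) → k) :=
  MonoidAlgebra.lift k _ _ (permHom k N d)

theorem rep_of {N d : ℕ} (σ : Equiv.Perm (Fin N)) :
    rep k N d (MonoidAlgebra.of k _ σ) = permEnd k d σ :=
  MonoidAlgebra.lift_of _ σ

/-- Delta function basis vector. -/
def delta {N d : ℕ} (J : Fin N → Fin d) : (Fin N → Fin d) → k := Pi.single J 1

theorem comp_perm_eq_iff {N d : ℕ} (σ : Equiv.Perm (Fin N)) (I J : Fin N → Fin d) :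
    I ∘ ⇑σ = J ↔ I = J ∘ ⇑σ⁻¹ := by
  constructor
  · rintro rfl; funext x; simp
  · rintro rfl; funext x; simp

theorem permEnd_delta {N d : ℕ} (σ : Equiv.Perm (Fin N)) (J : Fin N → Fin d) :
    permEnd k d σ (delta J) = delta (J ∘ ⇑σ⁻¹) := by
  funext I
  simp only [permEnd, LinearMap.funLeft_apply, delta]
  rcases eq_or_ne (I ∘ ⇑σ) J with h | h
  · rw [h, Pi.single_eq_same, (comp_perm_eq_iff σ I J).1 h, Pi.single_eq_same]
  · rw [Pi.single_eq_of_ne h, Pi.single_eq_of_ne]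
    intro hc
    exact h ((comp_perm_eq_iff σ I J).2 hc)
/-! ### Antisymmetrizers over arbitrary embeddings -/

variable (k) in
/-- The antisymmetrizer over the letters in the range of an embedding `e`. -/
def asym {t N : ℕ} (e : Fin t ↪ Fin N) : MonoidAlgebra k (Equiv.Perm (Fin N)) :=
  ∑ σ : Equiv.Perm (Fin t),
    (Equiv.Perm.sign σ : ℤ) • MonoidAlgebra.of k (Equiv.Perm (Fin N)) (σ.viaEmbedding e)

theorem skewSymmetrizerIn_eq_asym {N t : ℕ} (h : t ≤ N) :
    skewSymmetrizerIn k N t h = asym k (Fin.castLEEmb h) := rfl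

/-! ### Basic lemmas about `twoSidedSpan` -/

theorem self_mem_twoSidedSpan {A : Type*} [Ring A] [Algebra k A] (x : A) :
    x ∈ twoSidedSpan k x :=
  Submodule.subset_span ⟨1, 1, by simp⟩

theorem mul_mem_twoSidedSpan {A : Type*} [Ring A] [Algebra k A] {x y : A} (a b : A)
    (h : y ∈ twoSidedSpan k x) : a * y * b ∈ twoSidedSpan k x := by
  induction h using Submodule.span_induction with
  | mem y hy =>
    obtain ⟨g, h', rfl⟩ := hy
    exact Submodule.subset_span ⟨a * g, h' * b, by noncomm_ring⟩
  | zero => simpa using Submodule.zero_mem _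
  | add y z _ _ hy hz => simpa [mul_add, add_mul] using Submodule.add_mem _ hy hz
  | smul c y _ hy =>
    have : a * c • y * b = c • (a * y * b) := by
      rw [mul_smul_comm, smul_mul_assoc]
    rw [this]; exact Submodule.smul_mem _ _ hy

theorem mul_left_mem_twoSidedSpan {A : Type*} [Ring A] [Algebra k A] {x y : A} (a : A)
    (h : y ∈ twoSidedSpan k x) : a * y ∈ twoSidedSpan k x := by
  simpa using mul_mem_twoSidedSpan a 1 h

/-! ### Any embedding extends to a permutation -/

theorem exists_perm_comp {t N : ℕ} (e₁ e₂ : Fin t ↪ Fin N) :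
    ∃ g : Equiv.Perm (Fin N), ∀ i, g (e₁ i) = e₂ i := by
  classical
  set f : Fin N → Fin N := fun x =>
    if h : ∃ i, e₁ i = x then e₂ h.choose else x with hf
  have hfe : ∀ i, f (e₁ i) = e₂ i := by
    intro i
    have h : ∃ j, e₁ j = e₁ i := ⟨i, rfl⟩
    have hch : h.choose = i := e₁.injective h.choose_spec
    simp only [hf, dif_pos h, hch]
  obtain ⟨g, hg⟩ := Finset.exists_equiv_extend_of_card_eq
    (α := Fin N) (t := (Finset.univ : Finset (Fin N)))
    (by simp) (s := Finset.univ.image ⇑e₁) (f := f)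
    (by intro x _; simp) (by
      intro x hx y hy hxy
      simp only [Finset.coe_image, Finset.coe_univ, Set.image_univ, Set.mem_range] at hx hy
      obtain ⟨i, rfl⟩ := hx
      obtain ⟨j, rfl⟩ := hy
      rw [hfe, hfe] at hxy
      exact congrArg ⇑e₁ (e₂.injective hxy))
  refine ⟨g.trans (Equiv.subtypeUnivEquiv fun x => Finset.mem_univ x), fun i => ?_⟩
  have hgi := hg (e₁ i) (by simp)
  rw [Equiv.trans_apply, Equiv.subtypeUnivEquiv_apply, hgi, hfe]

theorem conj_viaEmbedding {t N : ℕ} {e₁ e₂ : Fin t ↪ Fin N} {g : Equiv.Perm (Fin N)}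
    (hg : ∀ i, g (e₁ i) = e₂ i) (ρ : Equiv.Perm (Fin t)) :
    g * ρ.viaEmbedding e₁ * g⁻¹ = ρ.viaEmbedding e₂ := by
  ext x
  rcases em (x ∈ Set.range ⇑e₂) with ⟨i, rfl⟩ | hx
  · have hginv : g⁻¹ (e₂ i) = e₁ i := by rw [← hg i]; simp
    simp only [Equiv.Perm.coe_mul, Function.comp_apply, hginv,
      Equiv.Perm.viaEmbedding_apply, hg]
  · have hginv : g⁻¹ x ∉ Set.range ⇑e₁ := by
      rintro ⟨i, hi⟩
      exact hx ⟨i, by rw [← hg i, hi]; simp⟩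
    simp only [Equiv.Perm.coe_mul, Function.comp_apply,
      Equiv.Perm.viaEmbedding_apply_of_notMem _ _ _ hginv,
      Equiv.Perm.viaEmbedding_apply_of_notMem _ _ _ hx]
    simp

theorem asym_mem_twoSidedSpan {t N : ℕ} (h : t ≤ N) (e : Fin t ↪ Fin N) :
    asym k e ∈ twoSidedSpan k (skewSymmetrizerIn k N t h) := by
  obtain ⟨g, hg⟩ := exists_perm_comp (Fin.castLEEmb h) e
  have key : asym k e = MonoidAlgebra.of k _ g * skewSymmetrizerIn k N t h *
      MonoidAlgebra.of k _ g⁻¹ := by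
    rw [skewSymmetrizerIn_eq_asym, asym, asym, Finset.mul_sum, Finset.sum_mul]
    refine Finset.sum_congr rfl fun ρ _ => ?_
    rw [mul_smul_comm, smul_mul_assoc, ← map_mul, ← map_mul, conj_viaEmbedding hg]
  rw [key]
  exact mul_mem_twoSidedSpan _ _ (self_mem_twoSidedSpan _)

/-! ### The antisymmetrizer on `d+1` letters acts as zero -/

theorem comp_viaEmbedding_swap {t N d : ℕ} (e : Fin t ↪ Fin N) (J : Fin N → Fin d)
    {i j : Fin t} (hij : J (e i) = J (e j)) :
    J ∘ ⇑((Equiv.swap i j).viaEmbedding e) = J := by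
  funext x
  rcases em (x ∈ Set.range ⇑e) with ⟨a, rfl⟩ | hx
  · rw [Function.comp_apply, Equiv.Perm.viaEmbedding_apply]
    rcases eq_or_ne a i with rfl | hai
    · rw [Equiv.swap_apply_left]; exact hij.symm
    rcases eq_or_ne a j with rfl | haj
    · rw [Equiv.swap_apply_right]; exact hij
    · rw [Equiv.swap_apply_of_ne_of_ne hai haj]
  · rw [Function.comp_apply, Equiv.Perm.viaEmbedding_apply_of_notMem _ _ _ hx]

theorem rep_asym_eq_zero {N d : ℕ} (e : Fin (d + 1) ↪ Fin N) :
    rep k N d (asym k e) = 0 := by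
  refine Module.Basis.ext (Pi.basisFun k (Fin N → Fin d)) fun J => ?_
  rw [asym, map_sum, LinearMap.zero_apply, LinearMap.sum_apply]
  have hbasis : (Pi.basisFun k (Fin N → Fin d)) J = delta (k := k) J := by
    simp [delta, Pi.basisFun_apply]
  rw [hbasis]
  -- find a collision of J on the embedded letters
  obtain ⟨i, j, hij, hJ⟩ := Fintype.exists_ne_map_eq_of_card_lt (fun a : Fin (d+1) => J (e a))
    (by simp)
  refine Finset.sum_ninvolution (fun ρ => ρ * Equiv.swap i j) (fun ρ => ?_) (fun ρ h => ?_)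
    (fun ρ => Finset.mem_univ _) (fun ρ => by
      show ρ * Equiv.swap i j * Equiv.swap i j = ρ
      rw [mul_assoc, Equiv.swap_mul_self, mul_one])
  · -- terms cancel in pairs
    rw [map_zsmul, map_zsmul, LinearMap.smul_apply, LinearMap.smul_apply, rep_of, rep_of,
      permEnd_delta, permEnd_delta]
    have hsign : (Equiv.Perm.sign (ρ * Equiv.swap i j) : ℤ) = -(Equiv.Perm.sign ρ : ℤ) := by
      rw [map_mul, Equiv.Perm.sign_swap hij]; simp
    have harg : J ∘ ⇑((ρ * Equiv.swap i j).viaEmbedding e)⁻¹ = J ∘ ⇑(ρ.viaEmbedding e)⁻¹ := by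
      have hmul : (ρ * Equiv.swap i j).viaEmbedding e =
          ρ.viaEmbedding e * (Equiv.swap i j).viaEmbedding e := by
        rw [← Equiv.Perm.viaEmbeddingHom_apply, ← Equiv.Perm.viaEmbeddingHom_apply,
          ← Equiv.Perm.viaEmbeddingHom_apply, map_mul]
      rw [hmul, mul_inv_rev]
      have hswapinv : ((Equiv.swap i j).viaEmbedding e)⁻¹ =
          (Equiv.swap i j).viaEmbedding e := by
        rw [← Equiv.Perm.viaEmbeddingHom_apply, ← map_inv, Equiv.swap_inv]
      rw [hswapinv, Equiv.Perm.coe_mul, ← Function.comp_assoc,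
        comp_viaEmbedding_swap e J hJ]
    rw [hsign, harg, neg_smul, add_neg_cancel]
  · -- the involution has no fixed points
    intro heq
    have h1 : Equiv.swap i j = 1 := by
      have h0 := congrArg (fun z => ρ⁻¹ * z) heq
      simpa [← mul_assoc] using h0
    exact hij (Equiv.swap_eq_one_iff.1 h1)
/-! ### Increasing subsequences and straightening -/

/-- `σ` has an increasing subsequence of length `d+1`. -/
def HasInc {N : ℕ} (d : ℕ) (σ : Equiv.Perm (Fin N)) : Prop :=
  ∃ s : Fin (d + 1) → Fin N, StrictMono s ∧ StrictMono (⇑σ ∘ s)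

theorem perm_exists_ne_of_ne_one {M : ℕ} {ρ : Equiv.Perm (Fin M)} (hρ : ρ ≠ 1) :
    ∃ i, ρ i ≠ i := by
  by_contra hc
  push_neg at hc
  exact hρ (Equiv.ext fun i => hc i)

/-- Multiplying on the right by a nontrivial permutation of an increasing subsequence
strictly increases the word in lexicographic order. -/
theorem wlt_mul_viaEmbedding {N d : ℕ} {σ : Equiv.Perm (Fin N)} {s : Fin (d + 1) → Fin N}
    (hs : StrictMono s) (hσs : StrictMono (⇑σ ∘ s)) {ρ : Equiv.Perm (Fin (d + 1))}
    (hρ : ρ ≠ 1) : wlt σ (σ * ρ.viaEmbedding ⟨s, hs.injective⟩) := by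
  classical
  set e : Fin (d + 1) ↪ Fin N := ⟨s, hs.injective⟩ with he
  obtain ⟨iwit, hiwit⟩ := perm_exists_ne_of_ne_one hρ
  set D : Finset (Fin (d + 1)) := Finset.univ.filter (fun i => ρ i ≠ i) with hD
  have hDne : D.Nonempty := ⟨iwit, by simp [hD, hiwit]⟩
  set i₀ : Fin (d + 1) := D.min' hDne with hi₀
  have hmem : ρ i₀ ≠ i₀ :=
    (Finset.mem_filter.1 (D.min'_mem hDne)).2
  have hfix : ∀ j, j < i₀ → ρ j = j := by
    intro j hj
    by_contra hc
    exact absurd (D.min'_le j (by simp [hD, hc])) (not_le.2 hj)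
  have hgt : i₀ < ρ i₀ := by
    rcases lt_trichotomy (ρ i₀) i₀ with h | h | h
    · exact absurd (ρ.injective (hfix (ρ i₀) h)) hmem
    · exact absurd h hmem
    · exact h
  refine ⟨s i₀, ?_, ?_⟩
  · have h1 : (σ * ρ.viaEmbedding e) (s i₀) = σ (s (ρ i₀)) := by
      have : ρ.viaEmbedding e (e i₀) = e (ρ i₀) := Equiv.Perm.viaEmbedding_apply ρ e i₀
      simp only [Equiv.Perm.coe_mul, Function.comp_apply]
      rw [show s i₀ = e i₀ from rfl, this]
      rfl
    rw [h1]
    exact hσs hgt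
  · intro q hq
    rcases em (q ∈ Set.range s) with ⟨j, rfl⟩ | hqr
    · have hj : j < i₀ := by
        rw [← hs.lt_iff_lt]; exact hq
      have : ρ.viaEmbedding e (e j) = e (ρ j) := Equiv.Perm.viaEmbedding_apply ρ e j
      simp only [Equiv.Perm.coe_mul, Function.comp_apply]
      rw [show s j = e j from rfl, this, hfix j hj]
    · have : ρ.viaEmbedding e q = q := by
        apply Equiv.Perm.viaEmbedding_apply_of_notMem
        simpa [he] using hqr
      simp only [Equiv.Perm.coe_mul, Function.comp_apply, this]

variable (k) in
/-- The span of permutations with no increasing subsequence of length `d+1`. -/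
def nfSpan (N d : ℕ) : Submodule k (MonoidAlgebra k (Equiv.Perm (Fin N))) :=
  MonoidAlgebra.supported k k {σ : Equiv.Perm (Fin N) | ¬ HasInc d σ}

/-- Straightening: every permutation lies in the span of the normal forms plus the ideal. -/
theorem straightening {N d : ℕ} (h : d + 1 ≤ N) (σ : Equiv.Perm (Fin N)) :
    MonoidAlgebra.of k _ σ ∈
      nfSpan k N d ⊔ twoSidedSpan k (skewSymmetrizerIn k N (d + 1) h) := by
  induction σ using wlt_induction with
  | H σ IH =>
    rcases em (HasInc d σ) with ⟨s, hs, hσs⟩ | hno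
    · set e : Fin (d + 1) ↪ Fin N := ⟨s, hs.injective⟩ with he
      have key : MonoidAlgebra.of k _ σ = MonoidAlgebra.of k _ σ * asym k e -
          ∑ ρ ∈ Finset.univ.erase (1 : Equiv.Perm (Fin (d + 1))),
            (Equiv.Perm.sign ρ : ℤ) • MonoidAlgebra.of k _ (σ * ρ.viaEmbedding e) := by
        rw [asym, Finset.mul_sum]
        have hterm : ∀ ρ : Equiv.Perm (Fin (d + 1)),
            MonoidAlgebra.of k (Equiv.Perm (Fin N)) σ *
              ((Equiv.Perm.sign ρ : ℤ) • MonoidAlgebra.of k _ (ρ.viaEmbedding e)) =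
            (Equiv.Perm.sign ρ : ℤ) • MonoidAlgebra.of k _ (σ * ρ.viaEmbedding e) := by
          intro ρ
          rw [mul_smul_comm, ← map_mul]
        simp_rw [hterm]
        rw [← Finset.sum_erase_add _ _ (Finset.mem_univ (1 : Equiv.Perm (Fin (d + 1))))]
        have h1 : (1 : Equiv.Perm (Fin (d+1))).viaEmbedding e = 1 := by
          rw [← Equiv.Perm.viaEmbeddingHom_apply, map_one]
        rw [h1]
        simp
      rw [key]
      refine Submodule.sub_mem _ ?_ (Submodule.sum_mem _ fun ρ hρ => ?_)
      · exact Submodule.mem_sup_right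
          (mul_left_mem_twoSidedSpan _ (asym_mem_twoSidedSpan h e))
      · exact zsmul_mem (IH _ (wlt_mul_viaEmbedding hs hσs (Finset.ne_of_mem_erase hρ))) _
    · exact Submodule.mem_sup_left (MonoidAlgebra.mem_supported'.2 fun τ hτ => by
        have hne : σ ≠ τ := fun h => hτ (h ▸ hno)
        simp [MonoidAlgebra.of_apply, hne])

/-! ### The Mirsky colouring -/

theorem mirsky {N d : ℕ} (hd : 1 ≤ d) {σ₀ : Equiv.Perm (Fin N)} (h : ¬ HasInc d σ₀) :
    ∃ J : Fin N → Fin d, ∀ p q, p < q → J p = J q → σ₀ q < σ₀ p := by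
  classical
  -- `IsChn F`: `σ₀` is increasing along `F`
  set IsChn : Finset (Fin N) → Prop :=
    fun F => ∀ a ∈ F, ∀ b ∈ F, a < b → σ₀ a < σ₀ b with hChn
  set ℓ : Fin N → ℕ := fun p =>
    (Finset.univ.filter (fun F => IsChn F ∧ p ∈ F ∧ ∀ a ∈ F, a ≤ p)).sup Finset.card with hℓ
  have hone : ∀ p, 1 ≤ ℓ p := by
    intro p
    have hmem : ({p} : Finset (Fin N)) ∈
        Finset.univ.filter (fun F => IsChn F ∧ p ∈ F ∧ ∀ a ∈ F, a ≤ p) := by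
      simp only [Finset.mem_filter, Finset.mem_univ, true_and]
      refine ⟨fun a ha b hb hab => ?_, by simp, by simp⟩
      simp only [Finset.mem_singleton] at ha hb
      subst ha; subst hb; exact absurd hab (lt_irrefl _)
    have hcard := Finset.le_sup (f := Finset.card) hmem
    rw [Finset.card_singleton] at hcard
    exact hcard
  have hbd : ∀ p, ℓ p ≤ d := by
    intro p
    refine Finset.sup_le fun F hF => ?_
    simp only [Finset.mem_filter, Finset.mem_univ, true_and] at hF
    by_contra hc
    push_neg at hc
    obtain ⟨F', hF'sub, hF'card⟩ := Finset.exists_subset_card_eq (n := d + 1) hc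
    apply h
    set s := F'.orderEmbOfFin hF'card with hs
    refine ⟨⇑s, s.strictMono, fun i j hij => ?_⟩
    exact hF.1 _ (hF'sub (F'.orderEmbOfFin_mem hF'card i)) _
      (hF'sub (F'.orderEmbOfFin_mem hF'card j)) (s.strictMono hij)
  have hlt : ∀ p q, p < q → σ₀ p < σ₀ q → ℓ p < ℓ q := by
    intro p q hpq hσ
    have hne : (Finset.univ.filter
        (fun F => IsChn F ∧ p ∈ F ∧ ∀ a ∈ F, a ≤ p)).Nonempty := by
      refine ⟨{p}, ?_⟩
      simp only [Finset.mem_filter, Finset.mem_univ, true_and]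
      refine ⟨fun a ha b hb hab => ?_, by simp, by simp⟩
      simp only [Finset.mem_singleton] at ha hb
      subst ha; subst hb; exact absurd hab (lt_irrefl _)
    obtain ⟨F, hF, hFsup⟩ := Finset.exists_mem_eq_sup _ hne Finset.card
    simp only [Finset.mem_filter, Finset.mem_univ, true_and] at hF
    obtain ⟨hchain, hpF, hle⟩ := hF
    have hqF : q ∉ F := fun hq => absurd (hle q hq) (not_le.2 hpq)
    have hins : (insert q F) ∈ Finset.univ.filter
        (fun F => IsChn F ∧ q ∈ F ∧ ∀ a ∈ F, a ≤ q) := by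
      simp only [Finset.mem_filter, Finset.mem_univ, true_and]
      refine ⟨?_, Finset.mem_insert_self _ _, ?_⟩
      · intro a ha b hb hab
        rcases Finset.mem_insert.1 ha with rfl | haF
        · rcases Finset.mem_insert.1 hb with rfl | hbF
          · exact absurd hab (lt_irrefl _)
          · exact absurd (lt_of_lt_of_le hab ((hle b hbF).trans hpq.le)) (lt_irrefl _)
        · rcases Finset.mem_insert.1 hb with rfl | hbF
          · rcases eq_or_lt_of_le (hle a haF) with rfl | hap
            · exact hσ
            · exact (hchain a haF p hpF hap).trans hσ
          · exact hchain a haF b hbF hab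
      · intro a ha
        rcases Finset.mem_insert.1 ha with rfl | haF
        · exact le_rfl
        · exact (hle a haF).trans hpq.le
    have hsup := Finset.le_sup (f := Finset.card) hins
    rw [Finset.card_insert_of_notMem hqF] at hsup
    have hp' : ℓ p = F.card := hFsup
    have hq' : F.card + 1 ≤ ℓ q := hsup
    omega
  refine ⟨fun p => ⟨ℓ p - 1, by have h1 := hone p; have h2 := hbd p; omega⟩, ?_⟩
  intro p q hpq hJ
  have hℓeq : ℓ p = ℓ q := by
    have h1 := hone p; have h2 := hone q
    have h3 : ℓ p - 1 = ℓ q - 1 := congrArg Fin.val hJ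
    omega
  rcases lt_trichotomy (σ₀ p) (σ₀ q) with hc | hc | hc
  · exact absurd (hlt p q hpq hc) (by omega)
  · exact absurd (σ₀.injective hc) (ne_of_lt hpq)
  · exact hc
/-! ### Linear independence of normal forms under the representation -/

theorem wlt_of_classPreserving {N d : ℕ} {σ₀ π : Equiv.Perm (Fin N)} {J : Fin N → Fin d}
    (hJ : ∀ p q, p < q → J p = J q → σ₀ q < σ₀ p) (hπ : J ∘ ⇑π = J) (h1 : π ≠ 1) :
    wlt (σ₀ * π) σ₀ := by
  classical
  obtain ⟨iwit, hiwit⟩ := perm_exists_ne_of_ne_one h1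
  set D : Finset (Fin N) := Finset.univ.filter (fun p => π p ≠ p) with hD
  have hDne : D.Nonempty := ⟨iwit, by simp [hD, hiwit]⟩
  set p₀ : Fin N := D.min' hDne with hp₀
  have hmem : π p₀ ≠ p₀ := (Finset.mem_filter.1 (D.min'_mem hDne)).2
  have hfix : ∀ q, q < p₀ → π q = q := by
    intro q hq
    by_contra hc
    exact absurd (D.min'_le q (by simp [hD, hc])) (not_le.2 hq)
  have hgt : p₀ < π p₀ := by
    rcases lt_trichotomy (π p₀) p₀ with hcase | hcase | hcase
    · exact absurd (π.injective (hfix (π p₀) hcase)) hmem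
    · exact absurd hcase hmem
    · exact hcase
  refine ⟨p₀, ?_, ?_⟩
  · have hclass : J (π p₀) = J p₀ := congrFun hπ p₀
    have := hJ p₀ (π p₀) hgt hclass.symm
    simpa using this
  · intro q hq
    simp only [Equiv.Perm.coe_mul, Function.comp_apply, hfix q hq]

/-- Independence: a combination of normal forms in the kernel of `rep` is zero. -/
theorem independence {N d : ℕ} (hd : 1 ≤ d) (c : MonoidAlgebra k (Equiv.Perm (Fin N)))
    (hsupp : ∀ σ ∈ c.coeff.support, ¬ HasInc d σ) (hker : rep k N d c = 0) : c = 0 := by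
  classical
  by_contra hc
  haveI : IsTrans (Equiv.Perm (Fin N)) wlt := ⟨fun _ _ _ => wlt_trans⟩
  haveI : IsIrrefl (Equiv.Perm (Fin N)) wlt := ⟨wlt_irrefl⟩
  have hwf : WellFounded (wlt (N := N)) := Finite.wellFounded_of_trans_of_irrefl _
  have hSne : (↑c.coeff.support : Set (Equiv.Perm (Fin N))).Nonempty :=
    Finset.coe_nonempty.2 (Finsupp.support_nonempty_iff.2 (fun h0 => hc (MonoidAlgebra.coeff_eq_zero.1 h0)))
  obtain ⟨σ₀, hσ₀S, hmin⟩ := hwf.has_min ↑c.coeff.support hSne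
  obtain ⟨J, hJ⟩ := mirsky hd (hsupp σ₀ hσ₀S)
  -- evaluate the representation on the delta function of `J`, at the point `J ∘ σ₀⁻¹`
  have hrep : rep k N d c = ∑ σ ∈ c.coeff.support, c.coeff σ • permEnd k d σ := by
    rw [rep, MonoidAlgebra.lift_apply, Finsupp.sum]
    rfl
  have heval := congrFun (congrArg (fun (T : Module.End k ((Fin N → Fin d) → k)) =>
      T (delta J)) hker) (J ∘ ⇑σ₀⁻¹)
  rw [hrep] at heval
  simp only [LinearMap.sum_apply, LinearMap.smul_apply, LinearMap.zero_apply,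
    Finset.sum_apply, Pi.smul_apply, Pi.zero_apply, smul_eq_mul] at heval
  have hterm : ∀ σ ∈ c.coeff.support, σ ≠ σ₀ →
      c.coeff σ * permEnd k d σ (delta J) (J ∘ ⇑σ₀⁻¹) = 0 := by
    intro σ hσ hne
    rw [permEnd_delta]
    have hcond : (J ∘ ⇑σ₀⁻¹ : Fin N → Fin d) ≠ J ∘ ⇑σ⁻¹ := by
      intro hcc
      -- derive that σ = σ₀ * π with π class-preserving
      set π : Equiv.Perm (Fin N) := σ₀⁻¹ * σ with hπdef
      have hπ : J ∘ ⇑π = J := by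
        have : (J ∘ ⇑σ₀⁻¹) ∘ ⇑σ = (J ∘ ⇑σ⁻¹) ∘ ⇑σ := by rw [hcc]
        funext x
        have hx := congrFun this x
        simpa [hπdef, Function.comp] using hx
      have hπ1 : π ≠ 1 := by
        intro hcone
        apply hne
        have := congrArg (fun z => σ₀ * z) hcone
        simpa [hπdef, ← mul_assoc] using this
      have hwlt : wlt σ σ₀ := by
        have := wlt_of_classPreserving hJ hπ hπ1
        have hσeq : σ₀ * π = σ := by simp [hπdef, ← mul_assoc]
        rwa [hσeq] at this
      exact hmin σ hσ hwlt
    rw [delta, Pi.single_eq_of_ne hcond, mul_zero]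
  rw [Finset.sum_eq_single_of_mem σ₀ hσ₀S hterm] at heval
  have hself : permEnd k d σ₀ (delta J) (J ∘ ⇑σ₀⁻¹) = 1 := by
    rw [permEnd_delta, delta, Pi.single_eq_same]
  rw [hself, mul_one] at heval
  exact (Finsupp.mem_support_iff.1 hσ₀S) heval

/-! ### The kernel of the representation -/

theorem span_le_ker {N d : ℕ} (h : d + 1 ≤ N) :
    twoSidedSpan k (skewSymmetrizerIn k N (d + 1) h) ≤
      LinearMap.ker (rep k N d).toLinearMap := by
  rw [twoSidedSpan, Submodule.span_le]
  rintro y ⟨g, h', rfl⟩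
  have hz : rep k N d (skewSymmetrizerIn k N (d + 1) h) = 0 := by
    rw [skewSymmetrizerIn_eq_asym]
    exact rep_asym_eq_zero _
  simp only [SetLike.mem_coe, LinearMap.mem_ker, AlgHom.toLinearMap_apply, map_mul, hz,
    zero_mul, mul_zero]

theorem ker_le_span {N d : ℕ} (hd : 1 ≤ d) (h : d + 1 ≤ N) :
    LinearMap.ker (rep k N d).toLinearMap ≤
      twoSidedSpan k (skewSymmetrizerIn k N (d + 1) h) := by
  intro x hx
  have hx' : rep k N d x = 0 := hx
  -- decompose x into normal forms plus ideal part
  have hmem : x ∈ nfSpan k N d ⊔ twoSidedSpan k (skewSymmetrizerIn k N (d + 1) h) := by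
    have hexp : x = ∑ σ ∈ x.coeff.support, x.coeff σ • MonoidAlgebra.of k _ σ := by
      conv_lhs => rw [← MonoidAlgebra.sum_coeff_single x]
      rw [Finsupp.sum]
      refine Finset.sum_congr rfl fun σ _ => ?_
      rw [MonoidAlgebra.of_apply, MonoidAlgebra.smul_single', mul_one]
    rw [hexp]
    exact Submodule.sum_mem _ fun σ _ => Submodule.smul_mem _ _ (straightening h σ)
  obtain ⟨s, hs, p, hp, hsum⟩ := Submodule.mem_sup.1 hmem
  have hps : rep k N d p = 0 := by
    have := span_le_ker (k := k) h hp
    rwa [LinearMap.mem_ker, AlgHom.toLinearMap_apply] at this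
  have hrs : rep k N d s = 0 := by
    have : rep k N d (s + p) = 0 := by rw [hsum]; exact hx'
    rw [map_add, hps, add_zero] at this
    exact this
  have hs0 : s = 0 := by
    refine independence hd s (fun σ hσ => ?_) hrs
    have := MonoidAlgebra.mem_supported.1 hs
    exact this hσ
  rw [← hsum, hs0, zero_add]
  exact hp
/-! ### The main theorem -/

theorem viaEmbedding_castLEEmb_rfl {N : ℕ} (σ : Equiv.Perm (Fin N)) :
    σ.viaEmbedding (Fin.castLEEmb (le_refl N)) = σ := by
  ext x
  have hx : (Fin.castLEEmb (le_refl N)) x = x := rfl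
  conv_lhs => rw [← hx]
  rw [Equiv.Perm.viaEmbedding_apply]
  exact hx ▸ rfl

theorem comulSym_of {N : ℕ} (σ : Equiv.Perm (Fin N)) :
    comulSym k N (MonoidAlgebra.of k _ σ) =
      MonoidAlgebra.of k _ σ ⊗ₜ[k] MonoidAlgebra.of k _ σ :=
  MonoidAlgebra.lift_of _ σ

end Stmt11

set_option maxHeartbeats 1000000 in
set_option synthInstance.maxHeartbeats 400000 in
open Stmt11 in
theorem stmt_11 (n m : ℕ) (hn : 1 ≤ n) (hm : 1 ≤ m) :
    comulSym k (n * m + 1) (skewSymmetrizerIn k (n * m + 1) (n * m + 1) le_rfl) ∈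
      LinearMap.range (TensorProduct.map
          (twoSidedSpan k (skewSymmetrizerIn k (n * m + 1) (n + 1) (by nlinarith))).subtype
          (LinearMap.id (R := k) (M := MonoidAlgebra k (Equiv.Perm (Fin (n * m + 1)))))) ⊔
      LinearMap.range (TensorProduct.map
          (LinearMap.id (R := k) (M := MonoidAlgebra k (Equiv.Perm (Fin (n * m + 1)))))
          (twoSidedSpan k (skewSymmetrizerIn k (n * m + 1) (m + 1) (by nlinarith))).subtype) := by
  classical
  have hn1 : n + 1 ≤ n * m + 1 := by nlinarith
  have hm1 : m + 1 ≤ n * m + 1 := by nlinarith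
  set N := n * m + 1 with hN
  set P₁ : Submodule k (MonoidAlgebra k (Equiv.Perm (Fin N))) :=
    twoSidedSpan k (skewSymmetrizerIn k N (n + 1) hn1) with hP₁
  set P₂ : Submodule k (MonoidAlgebra k (Equiv.Perm (Fin N))) :=
    twoSidedSpan k (skewSymmetrizerIn k N (m + 1) hm1) with hP₂
  show comulSym k N (skewSymmetrizerIn k N N le_rfl) ∈
    LinearMap.range (TensorProduct.map P₁.subtype LinearMap.id) ⊔
      LinearMap.range (TensorProduct.map LinearMap.id P₂.subtype)
  -- rewrite the target as a kernel
  have hker := TensorProduct.map_ker (LinearMap.exact_subtype_mkQ P₁) P₁.mkQ_surjective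
    (LinearMap.exact_subtype_mkQ P₂) P₂.mkQ_surjective
  have hgoal : LinearMap.range (TensorProduct.map P₁.subtype LinearMap.id) ⊔
      LinearMap.range (TensorProduct.map LinearMap.id P₂.subtype) =
      LinearMap.ker (TensorProduct.map P₁.mkQ P₂.mkQ) := by
    rw [hker, sup_comm]
    rfl
  rw [hgoal, LinearMap.mem_ker]
  -- the quotients embed into endomorphism algebras
  set φ₁ := (rep k N n).toLinearMap with hφ₁
  set φ₂ := (rep k N m).toLinearMap with hφ₂
  set ψ₁ := P₁.liftQ φ₁ (span_le_ker hn1) with hψ₁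
  set ψ₂ := P₂.liftQ φ₂ (span_le_ker hm1) with hψ₂
  have hinj₁ : Function.Injective ψ₁ := by
    rw [← LinearMap.ker_eq_bot]
    exact Submodule.ker_liftQ_eq_bot _ _ _ (ker_le_span hn hn1)
  have hinj₂ : Function.Injective ψ₂ := by
    rw [← LinearMap.ker_eq_bot]
    exact Submodule.ker_liftQ_eq_bot _ _ _ (ker_le_span hm hm1)
  have hΨinj : Function.Injective (TensorProduct.map ψ₁ ψ₂) := by
    rw [← LinearMap.lTensor_comp_rTensor, LinearMap.coe_comp]
    exact (Module.Flat.lTensor_preserves_injective_linearMap ψ₂ hinj₂).comp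
      (Module.Flat.rTensor_preserves_injective_linearMap ψ₁ hinj₁)
  apply hΨinj
  rw [map_zero]
  have hcomp : TensorProduct.map ψ₁ ψ₂ ∘ₗ TensorProduct.map P₁.mkQ P₂.mkQ =
      TensorProduct.map φ₁ φ₂ := by
    rw [← TensorProduct.map_comp]
    congr 1 <;> exact Submodule.liftQ_mkQ _ _ _
  rw [← LinearMap.comp_apply, hcomp]
  -- now compute the image under φ₁ ⊗ φ₂
  have hskew : skewSymmetrizerIn k N N le_rfl =
      ∑ σ : Equiv.Perm (Fin N), (Equiv.Perm.sign σ : ℤ) • MonoidAlgebra.of k _ σ := by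
    rw [skewSymmetrizerIn]
    exact Finset.sum_congr rfl fun σ _ => by rw [viaEmbedding_castLEEmb_rfl]
  have himg : (TensorProduct.map φ₁ φ₂) (comulSym k N (skewSymmetrizerIn k N N le_rfl)) =
      ∑ σ : Equiv.Perm (Fin N), (Equiv.Perm.sign σ : ℤ) •
        (permEnd k n σ ⊗ₜ[k] permEnd k m σ) := by
    rw [hskew, map_sum, map_sum]
    refine Finset.sum_congr rfl fun σ _ => ?_
    rw [map_zsmul, map_zsmul, comulSym_of, TensorProduct.map_tmul]
    congr 2 <;> exact rep_of σ
  rw [himg]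
  -- kill the sum via the isomorphism with End(V₁ ⊗ V₂) and a sign-reversing involution
  rw [← LinearEquiv.map_eq_zero_iff (homTensorHomEquiv k
    ((Fin N → Fin n) → k) ((Fin N → Fin m) → k) ((Fin N → Fin n) → k) ((Fin N → Fin m) → k))]
  rw [map_sum]
  have hterm : ∀ σ : Equiv.Perm (Fin N),
      (homTensorHomEquiv k _ _ _ _) ((Equiv.Perm.sign σ : ℤ) •
        (permEnd k n σ ⊗ₜ[k] permEnd k m σ)) =
      (Equiv.Perm.sign σ : ℤ) • TensorProduct.map (permEnd k n σ) (permEnd k m σ) := by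
    intro σ
    rw [map_zsmul, homTensorHomEquiv_apply, TensorProduct.homTensorHomMap_apply]
  simp_rw [hterm]
  -- pigeonhole data
  refine Module.Basis.ext ((Pi.basisFun k (Fin N → Fin n)).tensorProduct
    (Pi.basisFun k (Fin N → Fin m))) ?_
  rintro ⟨J₁, J₂⟩
  rw [LinearMap.zero_apply, LinearMap.sum_apply, Module.Basis.tensorProduct_apply]
  have hb₁ : (Pi.basisFun k (Fin N → Fin n)) J₁ = delta (k := k) J₁ := by
    simp [delta, Pi.basisFun_apply]
  have hb₂ : (Pi.basisFun k (Fin N → Fin m)) J₂ = delta (k := k) J₂ := by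
    simp [delta, Pi.basisFun_apply]
  rw [hb₁, hb₂]
  obtain ⟨i, j, hij, hpair⟩ := Fintype.exists_ne_map_eq_of_card_lt
    (fun x : Fin N => (J₁ x, J₂ x)) (by simp [hN])
  have hJ₁ : J₁ ∘ ⇑(Equiv.swap i j) = J₁ := by
    funext x
    rcases eq_or_ne x i with rfl | hxi
    · rw [Function.comp_apply, Equiv.swap_apply_left]
      exact (congrArg Prod.fst hpair).symm
    rcases eq_or_ne x j with rfl | hxj
    · rw [Function.comp_apply, Equiv.swap_apply_right]
      exact congrArg Prod.fst hpair
    · rw [Function.comp_apply, Equiv.swap_apply_of_ne_of_ne hxi hxj]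
  have hJ₂ : J₂ ∘ ⇑(Equiv.swap i j) = J₂ := by
    funext x
    rcases eq_or_ne x i with rfl | hxi
    · rw [Function.comp_apply, Equiv.swap_apply_left]
      exact (congrArg Prod.snd hpair).symm
    rcases eq_or_ne x j with rfl | hxj
    · rw [Function.comp_apply, Equiv.swap_apply_right]
      exact congrArg Prod.snd hpair
    · rw [Function.comp_apply, Equiv.swap_apply_of_ne_of_ne hxi hxj]
  refine Finset.sum_ninvolution (fun σ => σ * Equiv.swap i j) (fun σ => ?_)
    (fun σ h => ?_) (fun σ => Finset.mem_univ _) (fun σ => by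
      show σ * Equiv.swap i j * Equiv.swap i j = σ
      rw [mul_assoc, Equiv.swap_mul_self, mul_one])
  · rw [LinearMap.smul_apply, LinearMap.smul_apply, TensorProduct.map_tmul,
      TensorProduct.map_tmul, permEnd_delta, permEnd_delta, permEnd_delta, permEnd_delta]
    have hsign : (Equiv.Perm.sign (σ * Equiv.swap i j) : ℤ) = -(Equiv.Perm.sign σ : ℤ) := by
      rw [map_mul, Equiv.Perm.sign_swap hij]; simp
    have harg₁ : J₁ ∘ ⇑(σ * Equiv.swap i j)⁻¹ = J₁ ∘ ⇑σ⁻¹ := by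
      rw [mul_inv_rev, Equiv.swap_inv, Equiv.Perm.coe_mul, ← Function.comp_assoc, hJ₁]
    have harg₂ : J₂ ∘ ⇑(σ * Equiv.swap i j)⁻¹ = J₂ ∘ ⇑σ⁻¹ := by
      rw [mul_inv_rev, Equiv.swap_inv, Equiv.Perm.coe_mul, ← Function.comp_assoc, hJ₂]
    rw [hsign, harg₁, harg₂, neg_smul, add_neg_cancel]
  · intro heq
    have h1 : Equiv.swap i j = 1 := by
      have h0 := congrArg (fun z => σ⁻¹ * z) heq
      simpa [← mul_assoc] using h0
    exact hij (Equiv.swap_eq_one_iff.1 h1)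

end
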